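/- With α = √(1−ε), β = √(ε/3), α > β > 0: the inequality 2β(α+β) < (α+β)(α−β), i.e., the trace distance d(R_0R_0*, R_1R_1*) being strictly less than d(S_0S_0*, S_1S_1*) for the depolarizing-channel purification, holds if and only if ε < 1/4. Consequently, for ε < 1/4 there exists no TPCP map F with F(R_uR_v*) = S_uS_v* for all u,v ∈ {0,1}. -/

import Mathlib

open Matrix

/-- The trace norm of a (rectangular) complex matrix: the sum of its singular values. -/
noncomputable def traceNorm {m n : ℕ} (A : Matrix (Fin m) (Fin n) ℂ) : ℝ :=
  ∑ i, Real.sqrt ((Matrix.isHermitian_conjTranspose_mul_self A).eigenvalues i)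

/-- Per-Kraus-operator bound: `|Re tr(σ_z · G (CᴴC) Gᴴ)| ≤ Re tr(G (CᴴC) Gᴴ)`. -/
lemma aux_bound (C G : Matrix (Fin 2) (Fin 4) ℂ) :
    |((!![1,0;0,-1] * (G * (Cᴴ*C) * Gᴴ)).trace).re| ≤ ((G * (Cᴴ*C) * Gᴴ).trace).re := by
  have hM : G * (Cᴴ*C) * Gᴴ = (G*Cᴴ) * (G*Cᴴ)ᴴ := by
    rw [Matrix.conjTranspose_mul, Matrix.conjTranspose_conjTranspose]
    simp [Matrix.mul_assoc]
  set M := G * Cᴴ with hMdef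
  rw [hM]
  have hd : ∀ i, 0 ≤ ((M * Mᴴ) i i).re := by
    intro i
    simp only [Matrix.mul_apply, Matrix.conjTranspose_apply]
    rw [Complex.re_sum]
    apply Finset.sum_nonneg
    intro j _
    rw [Complex.star_def, Complex.mul_conj]
    simp [Complex.normSq_nonneg]
  have ht : (!![(1:ℂ),0;0,-1] * (M*Mᴴ)).trace = (M*Mᴴ) 0 0 - (M*Mᴴ) 1 1 := by
    simp [Matrix.trace, Matrix.mul_apply, Fin.sum_univ_succ, Matrix.diag]
    ring
  have ht2 : (M*Mᴴ).trace = (M*Mᴴ) 0 0 + (M*Mᴴ) 1 1 := by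
    simp [Matrix.trace, Fin.sum_univ_succ, Matrix.diag]
  rw [ht, ht2]
  have h0 := hd 0; have h1 := hd 1
  rw [Complex.sub_re, Complex.add_re, abs_le]
  constructor <;> linarith

set_option maxHeartbeats 1000000 in
/-- with `α = √(1−ε)`, `β = √(ε/3)`, `α > β > 0`, the inequality
`2β(α+β) < (α+β)(α−β)` holds iff `ε < 1/4`; consequently, for `ε < 1/4` there is no TPCP
map `F` with `F(R_u R_vᴴ) = S_u S_vᴴ` for all `u, v ∈ {0,1}` (the depolarizing-channel
matrices). -/
theorem depolarizing_no_channel (ε α β : ℝ)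
    (hε0 : 0 < ε) (hε1 : ε < 3 / 4)
    (hα : α = Real.sqrt (1 - ε)) (hβ : β = Real.sqrt (ε / 3))
    (S : Fin 2 → Matrix (Fin 2) (Fin 4) ℂ)
    (hS0 : S 0 = !![(α : ℂ), (β : ℂ), 0, 0; 0, 0, (β : ℂ), (β : ℂ)])
    (hS1 : S 1 = !![0, 0, -(β : ℂ), (β : ℂ); (α : ℂ), -(β : ℂ), 0, 0])
    (R : Fin 2 → Matrix (Fin 4) (Fin 2) ℂ)
    (hR : ∀ u, R u = (S u)ᵀ) :
    (2 * β * (α + β) < (α + β) * (α - β) ↔ ε < 1 / 4) ∧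
    (ε < 1 / 4 →
      ¬ ∃ (r : ℕ) (F : Fin r → Matrix (Fin 2) (Fin 4) ℂ),
          (∑ ℓ, (F ℓ)ᴴ * F ℓ = 1) ∧
          ∀ u v : Fin 2, ∑ ℓ, F ℓ * (R u * (R v)ᴴ) * (F ℓ)ᴴ = S u * (S v)ᴴ) := by
  have hβ0 : 0 < β := by rw [hβ]; exact Real.sqrt_pos.2 (by linarith)
  have hα0 : 0 < α := by rw [hα]; exact Real.sqrt_pos.2 (by linarith)
  have hβ2 : β ^ 2 = ε / 3 := by rw [hβ]; exact Real.sq_sqrt (by linarith)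
  have hα2 : α ^ 2 = 1 - ε := by rw [hα]; exact Real.sq_sqrt (by linarith)
  have key : (3*β < α) ↔ ε < 1/4 := by
    constructor
    · intro h
      nlinarith [mul_pos (show (0:ℝ) < 3*β + α by linarith)
        (show (0:ℝ) < α - 3*β by linarith)]
    · intro h
      nlinarith [sq_nonneg (3*β - α), (show (0:ℝ) < α + 3*β by linarith)]
  constructor
  · constructor
    · intro h
      apply key.mp
      nlinarith [(show (0:ℝ) < α + β by linarith)]
    · intro h
      have h3 : 3*β < α := key.mpr h
      nlinarith [mul_pos (show (0:ℝ) < α + β by linarith)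
        (show (0:ℝ) < α - 3*β by linarith)]
  · intro hε4
    rintro ⟨r, F, htp, hcp⟩
    have h3b : 3*β < α := key.mpr hε4
    set γ : ℝ := Real.sqrt (α*β) with hγdef
    have hγ2 : γ^2 = α*β := Real.sq_sqrt (by positivity)
    have hγ2C : (γ:ℂ) * γ = (α:ℂ) * β := by
      rw [← Complex.ofReal_mul, ← sq, hγ2, Complex.ofReal_mul]
    set A : Matrix (Fin 2) (Fin 4) ℂ := !![(γ:ℂ), γ, 0, 0; 0, 0, (β:ℂ), β] with hAdef
    set B : Matrix (Fin 2) (Fin 4) ℂ := !![(γ:ℂ), -γ, 0, 0; 0, 0, (β:ℂ), -β] with hBdef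
    -- the decomposition X = AᴴA - BᴴB
    have hX : R 0 * (R 0)ᴴ - R 1 * (R 1)ᴴ = Aᴴ * A - Bᴴ * B := by
      rw [hAdef, hBdef]
      ext i j
      fin_cases i <;> fin_cases j <;>
        simp [hR, hS0, hS1, Matrix.mul_apply, Fin.sum_univ_succ,
          Matrix.conjTranspose_apply, Complex.conj_ofReal] <;>
        linear_combination (-2:ℂ) * hγ2C
    -- CP condition applied to X
    have h1 : (∑ ℓ, F ℓ * (Aᴴ*A) * (F ℓ)ᴴ) - (∑ ℓ, F ℓ * (Bᴴ*B) * (F ℓ)ᴴ)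
        = S 0 * (S 0)ᴴ - S 1 * (S 1)ᴴ := by
      rw [← hcp 0 0, ← hcp 1 1, ← Finset.sum_sub_distrib, ← Finset.sum_sub_distrib]
      apply Finset.sum_congr rfl
      intro ℓ _
      rw [show F ℓ * (Aᴴ*A) * (F ℓ)ᴴ - F ℓ * (Bᴴ*B) * (F ℓ)ᴴ
            = F ℓ * (Aᴴ*A - Bᴴ*B) * (F ℓ)ᴴ by rw [Matrix.mul_sub, Matrix.sub_mul],
         ← hX, Matrix.mul_sub, Matrix.sub_mul]
    -- trace of σ_z times the output difference
    have hYtr : ((!![1,0;0,-1] : Matrix (Fin 2) (Fin 2) ℂ)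
          * (S 0 * (S 0)ᴴ - S 1 * (S 1)ᴴ)).trace = ((2*α^2 - 2*β^2 : ℝ) : ℂ) := by
      simp [hS0, hS1, Matrix.trace, Matrix.mul_apply, Fin.sum_univ_succ,
        Matrix.conjTranspose_apply, Complex.conj_ofReal, Matrix.diag,
        Matrix.vecMul, dotProduct]
      ring
    have h2 : (∑ ℓ, ((!![1,0;0,-1] : Matrix (Fin 2) (Fin 2) ℂ)
              * (F ℓ * (Aᴴ*A) * (F ℓ)ᴴ)).trace)
            - (∑ ℓ, ((!![1,0;0,-1] : Matrix (Fin 2) (Fin 2) ℂ)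
              * (F ℓ * (Bᴴ*B) * (F ℓ)ᴴ)).trace)
            = ((2*α^2 - 2*β^2 : ℝ) : ℂ) := by
      rw [← Matrix.trace_sum, ← Matrix.trace_sum, ← Finset.mul_sum, ← Finset.mul_sum,
        ← Matrix.trace_sub, ← Matrix.mul_sub, h1, hYtr]
    have h3 : (∑ ℓ, (((!![1,0;0,-1] : Matrix (Fin 2) (Fin 2) ℂ)
              * (F ℓ * (Aᴴ*A) * (F ℓ)ᴴ)).trace).re)
            - (∑ ℓ, (((!![1,0;0,-1] : Matrix (Fin 2) (Fin 2) ℂ)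
              * (F ℓ * (Bᴴ*B) * (F ℓ)ᴴ)).trace).re)
            = 2*α^2 - 2*β^2 := by
      have := congrArg Complex.re h2
      simpa [Complex.re_sum, ← Complex.ofReal_pow] using this
    -- trace preservation: total traces
    have hsum : ∀ C : Matrix (Fin 2) (Fin 4) ℂ,
        ∑ ℓ, (F ℓ * (Cᴴ*C) * (F ℓ)ᴴ).trace = (Cᴴ*C).trace := by
      intro C
      have h : ∀ ℓ, (F ℓ * (Cᴴ*C) * (F ℓ)ᴴ).trace = ((F ℓ)ᴴ * F ℓ * (Cᴴ*C)).trace := by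
        intro ℓ; rw [Matrix.trace_mul_cycle]
      simp_rw [h]
      rw [← Matrix.trace_sum, ← Finset.sum_mul, htp, one_mul]
    have htrA : (Aᴴ*A).trace = ((2*(α*β) + 2*β^2 : ℝ) : ℂ) := by
      rw [show (2*(α*β)+2*β^2 : ℝ) = 2*γ^2+2*β^2 by rw [hγ2], hAdef]
      simp [Matrix.trace, Matrix.mul_apply, Fin.sum_univ_succ,
        Matrix.conjTranspose_apply, Complex.conj_ofReal, Matrix.diag]
      ring
    have htrB : (Bᴴ*B).trace = ((2*(α*β) + 2*β^2 : ℝ) : ℂ) := by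
      rw [show (2*(α*β)+2*β^2 : ℝ) = 2*γ^2+2*β^2 by rw [hγ2], hBdef]
      simp [Matrix.trace, Matrix.mul_apply, Fin.sum_univ_succ,
        Matrix.conjTranspose_apply, Complex.conj_ofReal, Matrix.diag]
      ring
    have hPsum : (∑ ℓ, ((F ℓ * (Aᴴ*A) * (F ℓ)ᴴ).trace).re) = 2*(α*β) + 2*β^2 := by
      have := congrArg Complex.re ((hsum A).trans htrA)
      simpa [Complex.re_sum, ← Complex.ofReal_pow] using this
    have hNsum : (∑ ℓ, ((F ℓ * (Bᴴ*B) * (F ℓ)ᴴ).trace).re) = 2*(α*β) + 2*β^2 := by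
      have := congrArg Complex.re ((hsum B).trans htrB)
      simpa [Complex.re_sum, ← Complex.ofReal_pow] using this
    have hb1 : (∑ ℓ, (((!![1,0;0,-1] : Matrix (Fin 2) (Fin 2) ℂ)
            * (F ℓ * (Aᴴ*A) * (F ℓ)ᴴ)).trace).re)
          ≤ ∑ ℓ, ((F ℓ * (Aᴴ*A) * (F ℓ)ᴴ).trace).re :=
      Finset.sum_le_sum fun ℓ _ => le_trans (le_abs_self _) (aux_bound A (F ℓ))
    have hb2 : -(∑ ℓ, ((F ℓ * (Bᴴ*B) * (F ℓ)ᴴ).trace).re)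
          ≤ ∑ ℓ, (((!![1,0;0,-1] : Matrix (Fin 2) (Fin 2) ℂ)
            * (F ℓ * (Bᴴ*B) * (F ℓ)ᴴ)).trace).re := by
      rw [← Finset.sum_neg_distrib]
      exact Finset.sum_le_sum fun ℓ _ => (abs_le.1 (aux_bound B (F ℓ))).1
    -- contradiction
    nlinarith [mul_pos (show (0:ℝ) < α - 3*β by linarith)
      (show (0:ℝ) < α + β by linarith)]
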